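/- Let t ≥ 2 be an integer and let G be a finite connected simple graph with at least one edge such that cp^{(t)}(G) = ρ(G) − t + 1 + ⌈δ(G)/(t−1)⌉. Then t−1 divides δ(G), G is regular of degree δ(G), and G admits a K_t-decomposition in which any two distinct cliques intersect in exactly one vertex (equivalently, G is the block graph of a 2-(v,k,1) design with k = δ(G)/(t−1) and v = k·|V(G)|/t). -/

import Mathlib

open Finset SimpleGraph Polynomial

variable {V : Type*}

/-- A clique partition of `G`: a set of cliques of `G` such that every edge of `G`
lies in exactly one of them. -/
def IsCliquePartition [DecidableEq V] (G : SimpleGraph V) (P : Finset (Finset V)) : Prop :=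
  (∀ s ∈ P, G.IsClique (s : Set V)) ∧
    ∀ u v : V, G.Adj u v → ∃! s, s ∈ P ∧ u ∈ s ∧ v ∈ s

/-- The spectral radius of a finite graph: the largest eigenvalue of its adjacency matrix. -/
noncomputable def specRad [Fintype V] [DecidableEq V] (G : SimpleGraph V)
    [DecidableRel G.Adj] : ℝ :=
  sSup {μ : ℝ | Module.End.HasEigenvalue (Matrix.toLin' (G.adjMatrix ℝ)) μ}

/-- `cpT G t` : the minimum number of cliques in a clique partition of `G` in which
every clique has at most `t` vertices. -/
noncomputable def cpT [DecidableEq V] (G : SimpleGraph V) (t : ℕ) : ℕ :=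
  sInf {m | ∃ P : Finset (Finset V),
    IsCliquePartition G P ∧ (∀ s ∈ P, s.card ≤ t) ∧ P.card = m}

/-- `cp G` : the clique partition number of `G`. -/
noncomputable def cp [DecidableEq V] (G : SimpleGraph V) : ℕ :=
  sInf {m | ∃ P : Finset (Finset V), IsCliquePartition G P ∧ P.card = m}


set_option linter.unusedSectionVars false
set_option maxHeartbeats 1000000

section Aux
variable [Fintype V] [DecidableEq V]

lemma exists_perron (G : SimpleGraph V) [DecidableRel G.Adj] (hconn : G.Connected)
    (hedge : G.edgeSet.Nonempty) :
    ∃ x : V → ℝ, (∀ v, 0 < x v) ∧ (∑ v, x v ^ 2 = 1) ∧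
      ∀ v, ∑ u ∈ G.neighborFinset v, x u = specRad G * x v := by
  classical
  obtain ⟨a, b, hab⟩ : ∃ a b, G.Adj a b := by
    obtain ⟨e, he⟩ := hedge
    revert he
    refine Sym2.ind (fun x y h => ⟨x, y, G.mem_edgeSet.mp h⟩) e
  haveI : Nonempty V := ⟨a⟩
  haveI : Nontrivial (EuclideanSpace ℝ V) := (WithLp.equiv 2 (V → ℝ)).nontrivial
  set A : Matrix V V ℝ := G.adjMatrix ℝ with hA_def
  have hA : A.IsHermitian := by
    ext i j
    simp [A, Matrix.conjTranspose_apply, SimpleGraph.adjMatrix_apply, SimpleGraph.adj_comm]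
  set T : EuclideanSpace ℝ V →ₗ[ℝ] EuclideanSpace ℝ V := Matrix.toEuclideanLin A with hT_def
  have hsymm : T.IsSymmetric := Matrix.isHermitian_iff_isSymmetric.mp hA
  set lam : ℝ := ⨆ x : { x : EuclideanSpace ℝ V // x ≠ 0 },
      RCLike.re (inner ℝ (T x) (x : EuclideanSpace ℝ V) : ℝ) / ‖(x : EuclideanSpace ℝ V)‖ ^ 2
    with hlam_def
  have heig : Module.End.HasEigenvalue T lam :=
    hsymm.hasEigenvalue_iSup_of_finiteDimensional
  -- continuous version
  set T' := hsymm.toSelfAdjoint with hT'_def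
  have hT'app : ∀ z, T'.val z = T z := fun z => rfl
  have hbdd : BddAbove (Set.range fun x : { x : EuclideanSpace ℝ V // x ≠ 0 } =>
      RCLike.re (inner ℝ (T x) (x : EuclideanSpace ℝ V) : ℝ) / ‖(x : EuclideanSpace ℝ V)‖ ^ 2) := by
    refine ⟨‖T'.val‖, ?_⟩
    rintro r ⟨⟨z, hz⟩, rfl⟩
    have hz' : (0:ℝ) < ‖z‖ ^ 2 := pow_pos (norm_pos_iff.mpr hz) 2
    rw [div_le_iff₀ hz']
    have h1 : (inner ℝ (T z) z : ℝ) ≤ ‖T z‖ * ‖z‖ := real_inner_le_norm _ _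
    have h2 : ‖T z‖ ≤ ‖T'.val‖ * ‖z‖ := by
      have := T'.val.le_opNorm z
      simpa [hT'app] using this
    simp only [RCLike.re_to_real]
    nlinarith [norm_nonneg z, norm_nonneg (T z), norm_nonneg T'.val]
  have fact1 : ∀ z : EuclideanSpace ℝ V, (inner ℝ (T z) z : ℝ) ≤ lam * ‖z‖ ^ 2 := by
    intro z
    rcases eq_or_ne z 0 with rfl | hz
    · simp
    · have h := le_ciSup hbdd (⟨z, hz⟩ : { x : EuclideanSpace ℝ V // x ≠ 0 })
      rw [← hlam_def] at h
      have hz' : (0:ℝ) < ‖z‖ ^ 2 := pow_pos (norm_pos_iff.mpr hz) 2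
      have h2 := (div_le_iff₀ hz').mp h
      simp only [RCLike.re_to_real] at h2
      exact h2
  obtain ⟨x₀, hx₀⟩ := heig.exists_hasEigenvector
  have hx₀eq : T x₀ = lam • x₀ := hx₀.apply_eq_smul
  have hx₀ne : x₀ ≠ 0 := hx₀.right
  have hTapp : ∀ (z : EuclideanSpace ℝ V) (v : V), T z v = ∑ u ∈ G.neighborFinset v, z u := by
    intro z v
    show (Matrix.mulVec A ((WithLp.equiv 2 (V → ℝ)) z)) v = _
    rw [hA_def]
    exact G.adjMatrix_mulVec_apply v _
  have hinner : ∀ z w : EuclideanSpace ℝ V, (inner ℝ z w : ℝ) = ∑ v, z v * w v := by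
    intro z w
    simp [PiLp.inner_apply, RCLike.conj_to_real]
    exact Finset.sum_congr rfl fun _ _ => mul_comm _ _
  have hnormsq : ∀ z : EuclideanSpace ℝ V, ‖z‖ ^ 2 = ∑ v, z v * z v := by
    intro z
    rw [← real_inner_self_eq_norm_sq, hinner]
  set yf : V → ℝ := fun v => |x₀ v| with hyf_def
  set y : EuclideanSpace ℝ V := (WithLp.equiv 2 (V → ℝ)).symm yf with hy_def
  have hyapp : ∀ v, y v = |x₀ v| := fun v => rfl
  have hynormsq : ‖y‖ ^ 2 = ‖x₀‖ ^ 2 := by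
    rw [hnormsq, hnormsq]
    refine Finset.sum_congr rfl fun v _ => ?_
    rw [hyapp, abs_mul_abs_self]
  have hyne : y ≠ 0 := by
    intro h0
    apply hx₀ne
    rw [← norm_eq_zero]
    have : ‖y‖ = 0 := by rw [h0, norm_zero]
    nlinarith [norm_nonneg x₀, hynormsq]
  have hTx₀x₀ : (inner ℝ (T x₀) x₀ : ℝ) = lam * ‖x₀‖ ^ 2 := by
    rw [hx₀eq, real_inner_smul_left, real_inner_self_eq_norm_sq]
  have hyy : lam * ‖y‖ ^ 2 ≤ (inner ℝ (T y) y : ℝ) := by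
    rw [hynormsq, ← hTx₀x₀, hinner, hinner]
    refine Finset.sum_le_sum fun v _ => ?_
    rw [hTapp, hTapp, Finset.sum_mul, Finset.sum_mul]
    refine Finset.sum_le_sum fun u _ => ?_
    rw [hyapp, hyapp]
    calc x₀ u * x₀ v ≤ |x₀ u * x₀ v| := le_abs_self _
      _ = |x₀ u| * |x₀ v| := abs_mul _ _
  have hmax : IsMaxOn T'.val.reApplyInnerSelf (Metric.sphere (0 : EuclideanSpace ℝ V) ‖y‖) y := by
    intro z hz
    have hzn : ‖z‖ = ‖y‖ := mem_sphere_zero_iff_norm.mp hz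
    show T'.val.reApplyInnerSelf z ≤ T'.val.reApplyInnerSelf y
    simp only [ContinuousLinearMap.reApplyInnerSelf, hT'app, RCLike.re_to_real]
    calc (inner ℝ (T z) z : ℝ) ≤ lam * ‖z‖ ^ 2 := fact1 z
      _ = lam * ‖y‖ ^ 2 := by rw [hzn]
      _ ≤ (inner ℝ (T y) y : ℝ) := hyy
  have hEV := T'.prop.hasEigenvector_of_isMaxOn hyne hmax
  have hμ : (⨆ x : { x : EuclideanSpace ℝ V // x ≠ 0 }, T'.val.rayleighQuotient x) = lam := rfl
  have hyeq : T y = lam • y := by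
    have h2 := hEV.apply_eq_smul
    rw [hμ] at h2
    exact h2
  have hyeqv : ∀ v, ∑ u ∈ G.neighborFinset v, y u = lam * y v := by
    intro v
    rw [← hTapp y v, hyeq]
    rfl
  have hynn : ∀ v, 0 ≤ y v := fun v => by rw [hyapp]; exact abs_nonneg _
  have hzero : ∀ v, y v = 0 → ∀ u ∈ G.neighborFinset v, y u = 0 := by
    intro v hv u hu
    have hsum : ∑ u ∈ G.neighborFinset v, y u = 0 := by rw [hyeqv, hv, mul_zero]
    exact (Finset.sum_eq_zero_iff_of_nonneg (fun u _ => hynn u)).mp hsum u hu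
  have hwalk : ∀ (v u : V) (w : G.Walk v u), y v = 0 → y u = 0 := by
    intro v u w
    induction w with
    | nil => exact id
    | cons h p ih =>
        intro h0
        exact ih (hzero _ h0 _ (by simpa [SimpleGraph.mem_neighborFinset] using h))
  have hex : ∃ w, y w ≠ 0 := by
    by_contra hcon
    push_neg at hcon
    apply hyne
    have hyf0 : yf = 0 := funext fun v => hcon v
    simp [hy_def, hyf0]
  obtain ⟨w0, hw0⟩ := hex
  have hpos : ∀ v, 0 < y v := by
    intro v
    rcases (hynn v).lt_or_eq with h | h
    · exact h
    · exfalso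
      obtain ⟨wk⟩ := hconn.preconnected v w0
      exact hw0 (hwalk _ _ wk h.symm)
  have hspec : specRad G = lam := by
    have htrans : ∀ μ : ℝ, Module.End.HasEigenvalue (Matrix.toLin' (G.adjMatrix ℝ)) μ ↔
        Module.End.HasEigenvalue T μ := by
      intro μ
      constructor
      · intro hμ'
        obtain ⟨z, hzmem⟩ := hμ'.exists_hasEigenvector
        have hz : Matrix.toLin' (G.adjMatrix ℝ) z = μ • z := hzmem.apply_eq_smul
        refine Module.End.hasEigenvalue_of_hasEigenvector
          (x := (WithLp.equiv 2 (V → ℝ)).symm z) ⟨?_, ?_⟩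
        · rw [Module.End.mem_eigenspace_iff]
          show Matrix.toEuclideanLin A ((WithLp.equiv 2 (V → ℝ)).symm z) = _
          rw [show Matrix.toEuclideanLin A ((WithLp.equiv 2 (V → ℝ)).symm z) = (WithLp.equiv 2 (V → ℝ)).symm (Matrix.mulVec A z) from rfl, ← Matrix.toLin'_apply, hA_def, hz]
          rfl
        · intro h0
          apply hzmem.right
          have := congrArg (WithLp.equiv 2 (V → ℝ)) h0
          simpa using this
      · intro hμ'
        obtain ⟨z, hzmem⟩ := hμ'.exists_hasEigenvector
        have hz : T z = μ • z := hzmem.apply_eq_smul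
        refine Module.End.hasEigenvalue_of_hasEigenvector
          (x := (WithLp.equiv 2 (V → ℝ)) z) ⟨?_, ?_⟩
        · rw [Module.End.mem_eigenspace_iff]
          have := congrArg (WithLp.equiv 2 (V → ℝ)) hz
          rw [show (WithLp.equiv 2 (V → ℝ)) (T z) = Matrix.toLin' A ((WithLp.equiv 2 (V → ℝ)) z) from rfl] at this
          rw [← hA_def, this]
          rfl
        · intro h0
          apply hzmem.right
          have := congrArg (WithLp.equiv 2 (V → ℝ)).symm h0
          simpa using this
    unfold specRad
    have hset : {μ : ℝ | Module.End.HasEigenvalue (Matrix.toLin' (G.adjMatrix ℝ)) μ} =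
        {μ : ℝ | Module.End.HasEigenvalue T μ} := Set.ext fun μ => htrans μ
    rw [hset]
    apply IsGreatest.csSup_eq
    constructor
    · exact heig
    · rintro μ hμ'
      obtain ⟨z, hzmem⟩ := hμ'.exists_hasEigenvector
      have hz : T z = μ • z := hzmem.apply_eq_smul
      have h1 : (inner ℝ (T z) z : ℝ) = μ * ‖z‖ ^ 2 := by
        rw [hz, real_inner_smul_left, real_inner_self_eq_norm_sq]
      have h2 := fact1 z
      have hzpos : (0:ℝ) < ‖z‖ ^ 2 := pow_pos (norm_pos_iff.mpr hzmem.right) 2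
      rw [h1] at h2
      exact (mul_le_mul_iff_left₀ hzpos).mp h2
  set S : ℝ := ∑ v, y v ^ 2 with hS_def
  have hSpos : 0 < S := Finset.sum_pos (fun v _ => pow_pos (hpos v) 2) Finset.univ_nonempty
  set c : ℝ := Real.sqrt S with hc_def
  have hc : 0 < c := Real.sqrt_pos.mpr hSpos
  refine ⟨fun v => y v / c, fun v => div_pos (hpos v) hc, ?_, ?_⟩
  · have hterm : ∀ v : V, (y v / c) ^ 2 = y v ^ 2 / S := by
      intro v
      rw [div_pow, hc_def, Real.sq_sqrt hSpos.le]
    rw [Finset.sum_congr rfl (fun v _ => hterm v), ← Finset.sum_div, ← hS_def, div_self hSpos.ne']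
  · intro v
    rw [hspec, ← Finset.sum_div, hyeqv v, mul_div_assoc]

variable {G : SimpleGraph V} [DecidableRel G.Adj] {P : Finset (Finset V)}

lemma CP.unique (hP : IsCliquePartition G P) {Q R : Finset V} (hQ : Q ∈ P) (hR : R ∈ P)
    {u v : V} (huv : u ≠ v) (huQ : u ∈ Q) (hvQ : v ∈ Q) (huR : u ∈ R) (hvR : v ∈ R) :
    Q = R := by
  have hadj : G.Adj u v := hP.1 Q hQ huQ hvQ huv
  obtain ⟨s₀, _, huniq⟩ := hP.2 u v hadj
  rw [huniq Q ⟨hQ, huQ, hvQ⟩, huniq R ⟨hR, huR, hvR⟩]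

lemma CP.inter_le_one (hP : IsCliquePartition G P) {Q R : Finset V} (hQ : Q ∈ P) (hR : R ∈ P)
    (hne : Q ≠ R) : (Q ∩ R).card ≤ 1 := by
  by_contra hcon
  push_neg at hcon
  obtain ⟨u, hu, v, hv, huv⟩ := Finset.one_lt_card.mp hcon
  simp only [Finset.mem_inter] at hu hv
  exact hne (CP.unique hP hQ hR huv hu.1 hv.1 hu.2 hv.2)

lemma CP.filter_card_adj (hP : IsCliquePartition G P) {u v : V} (h : G.Adj u v) :
    (P.filter fun s => u ∈ s ∧ v ∈ s).card = 1 := by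
  obtain ⟨s₀, hs₀, huniq⟩ := hP.2 u v h
  rw [Finset.card_eq_one]
  refine ⟨s₀, ?_⟩
  ext s
  simp only [Finset.mem_filter, Finset.mem_singleton]
  constructor
  · intro ⟨h1, h2, h3⟩; exact huniq s ⟨h1, h2, h3⟩
  · intro h1; subst h1; exact ⟨hs₀.1, hs₀.2.1, hs₀.2.2⟩

lemma CP.filter_card_nonadj (hP : IsCliquePartition G P) {u v : V} (hne : u ≠ v)
    (h : ¬ G.Adj u v) : (P.filter fun s => u ∈ s ∧ v ∈ s).card = 0 := by
  rw [Finset.card_eq_zero, Finset.filter_eq_empty_iff]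
  rintro s hs ⟨hu, hv⟩
  exact h (hP.1 s hs hu hv hne)

lemma CP.degree_eq (hP : IsCliquePartition G P) (v : V) :
    G.degree v = ∑ Q ∈ P.filter (fun Q => v ∈ Q), (Q.card - 1) := by
  have hnb : G.neighborFinset v =
      (P.filter (fun Q => v ∈ Q)).biUnion (fun Q => Q.erase v) := by
    ext u
    simp only [SimpleGraph.mem_neighborFinset, Finset.mem_biUnion, Finset.mem_filter,
      Finset.mem_erase]
    constructor
    · intro hadj
      obtain ⟨s₀, ⟨hs₀, hvs₀, hus₀⟩, _⟩ := hP.2 v u hadj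
      exact ⟨s₀, ⟨hs₀, hvs₀⟩, hadj.ne', hus₀⟩
    · rintro ⟨Q, ⟨hQ, hvQ⟩, hne, huQ⟩
      exact hP.1 Q hQ hvQ huQ (Ne.symm hne)
  have hdisj : ∀ Q ∈ P.filter (fun Q => v ∈ Q), ∀ R ∈ P.filter (fun Q => v ∈ Q),
      Q ≠ R → Disjoint (Q.erase v) (R.erase v) := by
    intro Q hQ R hR hne
    simp only [Finset.mem_filter] at hQ hR
    rw [Finset.disjoint_left]
    intro u huQ huR
    rw [Finset.mem_erase] at huQ huR
    exact hne (CP.unique hP hQ.1 hR.1 huQ.1 huQ.2 hQ.2 huR.2 hR.2)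
  rw [SimpleGraph.degree, hnb, Finset.card_biUnion hdisj]
  refine Finset.sum_congr rfl fun Q hQ => ?_
  rw [Finset.mem_filter] at hQ
  rw [Finset.card_erase_of_mem hQ.2]

lemma CP.identity (hP : IsCliquePartition G P) (x : V → ℝ) :
    ∑ Q ∈ P, (∑ v ∈ Q, x v) ^ 2 =
      (∑ v, (∑ u ∈ G.neighborFinset v, x u) * x v) +
        ∑ v, ((P.filter (fun Q => v ∈ Q)).card : ℝ) * x v ^ 2 := by
  classical
  have expand : ∀ (s : Finset V) (f : V → ℝ),
      ∑ v ∈ s, f v = ∑ v, (if v ∈ s then f v else 0) := by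
    intro s f
    rw [Finset.sum_ite_mem, Finset.univ_inter]
  have ite_sum : ∀ (c : Prop) [Decidable c] (F : V → ℝ),
      (if c then (∑ u, F u) else 0) = ∑ u, (if c then F u else 0) := by
    intro c _ F
    split_ifs with h
    · rfl
    · simp
  have hconst : ∀ (p : Finset V → Prop) [DecidablePred p] (c : ℝ),
      (∑ Q ∈ P, if p Q then c else 0) = ((P.filter p).card : ℝ) * c := by
    intro p _ c
    rw [Finset.sum_ite, Finset.sum_const_zero, add_zero, Finset.sum_const, nsmul_eq_mul]
  -- step 1 : expand the square
  have step1 : ∀ Q : Finset V, (∑ v ∈ Q, x v) ^ 2 =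
      (∑ v ∈ Q, ∑ u ∈ Q.erase v, x v * x u) + ∑ v ∈ Q, x v ^ 2 := by
    intro Q
    rw [pow_two, Finset.sum_mul_sum]
    rw [← Finset.sum_add_distrib]
    refine Finset.sum_congr rfl fun v hv => ?_
    rw [← Finset.add_sum_erase _ (fun u => x v * x u) hv, pow_two]
    ring
  rw [Finset.sum_congr rfl (fun Q _ => step1 Q), Finset.sum_add_distrib]
  congr 1
  · -- cross terms
    have h1 : ∀ Q : Finset V, ∑ v ∈ Q, ∑ u ∈ Q.erase v, x v * x u
        = ∑ v, ∑ u, (if v ∈ Q ∧ (u ≠ v ∧ u ∈ Q) then x v * x u else 0) := by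
      intro Q
      rw [expand Q]
      refine Finset.sum_congr rfl fun v _ => ?_
      rw [expand (Q.erase v), ite_sum]
      refine Finset.sum_congr rfl fun u _ => ?_
      by_cases h1 : v ∈ Q <;> by_cases h2 : u ∈ Q.erase v <;>
        simp_all [Finset.mem_erase] <;> tauto
    rw [Finset.sum_congr rfl (fun Q _ => h1 Q)]
    rw [Finset.sum_comm]
    refine Finset.sum_congr rfl fun v _ => ?_
    rw [Finset.sum_comm]
    have key : ∀ u : V, (∑ Q ∈ P, if v ∈ Q ∧ (u ≠ v ∧ u ∈ Q) then x v * x u else 0)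
        = if u ∈ G.neighborFinset v then x v * x u else 0 := by
      intro u
      by_cases hne : u = v
      · subst hne
        simp [SimpleGraph.mem_neighborFinset]
      · by_cases hadj : G.Adj v u
        · have hcond : ∀ Q : Finset V, (v ∈ Q ∧ (u ≠ v ∧ u ∈ Q)) ↔ (v ∈ Q ∧ u ∈ Q) := by
            intro Q; constructor
            · rintro ⟨h1, _, h3⟩; exact ⟨h1, h3⟩
            · rintro ⟨h1, h3⟩; exact ⟨h1, hne, h3⟩
          calc (∑ Q ∈ P, if v ∈ Q ∧ (u ≠ v ∧ u ∈ Q) then x v * x u else 0)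
              = ∑ Q ∈ P, if v ∈ Q ∧ u ∈ Q then x v * x u else 0 :=
                Finset.sum_congr rfl fun Q _ => if_congr (hcond Q) rfl rfl
            _ = ((P.filter fun Q => v ∈ Q ∧ u ∈ Q).card : ℝ) * (x v * x u) := hconst _ _
            _ = x v * x u := by rw [CP.filter_card_adj hP hadj]; norm_num
            _ = if u ∈ G.neighborFinset v then x v * x u else 0 := by
                rw [if_pos (by rwa [SimpleGraph.mem_neighborFinset])]
        · have hcond : ∀ Q : Finset V, (v ∈ Q ∧ (u ≠ v ∧ u ∈ Q)) ↔ (v ∈ Q ∧ u ∈ Q) := by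
            intro Q; constructor
            · rintro ⟨h1, _, h3⟩; exact ⟨h1, h3⟩
            · rintro ⟨h1, h3⟩; exact ⟨h1, hne, h3⟩
          calc (∑ Q ∈ P, if v ∈ Q ∧ (u ≠ v ∧ u ∈ Q) then x v * x u else 0)
              = ∑ Q ∈ P, if v ∈ Q ∧ u ∈ Q then x v * x u else 0 :=
                Finset.sum_congr rfl fun Q _ => if_congr (hcond Q) rfl rfl
            _ = ((P.filter fun Q => v ∈ Q ∧ u ∈ Q).card : ℝ) * (x v * x u) := hconst _ _
            _ = 0 := by
                rw [CP.filter_card_nonadj hP (Ne.symm hne) hadj]; norm_num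
            _ = if u ∈ G.neighborFinset v then x v * x u else 0 := by
                rw [if_neg (by rwa [SimpleGraph.mem_neighborFinset])]
    rw [Finset.sum_congr rfl (fun u _ => key u), ← expand (G.neighborFinset v),
      Finset.sum_mul]
    exact Finset.sum_congr rfl fun u _ => mul_comm _ _
  · -- diagonal terms
    have h2 : ∀ Q : Finset V, ∑ v ∈ Q, x v ^ 2 = ∑ v, (if v ∈ Q then x v ^ 2 else 0) :=
      fun Q => expand Q _
    rw [Finset.sum_congr rfl (fun Q _ => h2 Q), Finset.sum_comm]
    exact Finset.sum_congr rfl fun v _ => hconst _ _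

lemma CP.chain (P : Finset (Finset V)) (t : ℕ)
    (hsize : ∀ Q ∈ P, Q.card ≤ t)
    (hint : ∀ Q ∈ P, ∀ R ∈ P, Q ≠ R → (Q ∩ R).card ≤ 1)
    (x : V → ℝ) (hx1 : ∑ v, x v ^ 2 = 1) (ht : (1:ℝ) ≤ (t:ℝ)) :
    ((∑ Q ∈ P, (∑ v ∈ Q, x v) ^ 2) ^ 2 ≤
      ∑ Q ∈ P, (∑ R ∈ P, ((Q ∩ R).card : ℝ)) * (∑ v ∈ Q, x v) ^ 2)
    ∧ (∀ Q ∈ P, (∑ R ∈ P, ((Q ∩ R).card : ℝ)) ≤ (P.card : ℝ) + t - 1)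
    ∧ (∑ Q ∈ P, (∑ v ∈ Q, x v) ^ 2 ≤ (P.card : ℝ) + t - 1) := by
  classical
  set s : Finset V → ℝ := fun Q => ∑ v ∈ Q, x v with hs_def
  set g : V → ℝ := fun v => ∑ Q ∈ P.filter (fun Q => v ∈ Q), s Q with hg_def
  set S : ℝ := ∑ Q ∈ P, s Q ^ 2 with hS_def
  have hfilter_inter : ∀ Q R : Finset V,
      (Finset.univ.filter fun v => v ∈ Q ∧ v ∈ R) = Q ∩ R := by
    intro Q R; ext v; simp [Finset.mem_inter]
  have hgexp : ∀ v, g v = ∑ Q ∈ P, (if v ∈ Q then s Q else 0) := by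
    intro v; rw [hg_def]; exact Finset.sum_filter _ _
  have hS : ∑ v, x v * g v = S := by
    calc ∑ v, x v * g v
        = ∑ v, ∑ Q ∈ P, (if v ∈ Q then x v * s Q else 0) := by
          refine Finset.sum_congr rfl fun v _ => ?_
          rw [hgexp, Finset.mul_sum]
          exact Finset.sum_congr rfl fun Q _ => by rw [mul_ite_zero]
      _ = ∑ Q ∈ P, ∑ v, (if v ∈ Q then x v * s Q else 0) := Finset.sum_comm
      _ = ∑ Q ∈ P, ∑ v ∈ Q, x v * s Q := by
          refine Finset.sum_congr rfl fun Q _ => ?_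
          rw [Finset.sum_ite_mem, Finset.univ_inter]
      _ = S := by
          refine Finset.sum_congr rfl fun Q _ => ?_
          rw [← Finset.sum_mul, pow_two]
  have hCS : S ^ 2 ≤ ∑ v, g v ^ 2 := by
    have := Finset.sum_mul_sq_le_sq_mul_sq Finset.univ x g
    rw [hS, hx1, one_mul] at this
    exact this
  have hgsq : ∑ v, g v ^ 2 = ∑ Q ∈ P, ∑ R ∈ P, ((Q ∩ R).card : ℝ) * (s Q * s R) := by
    calc ∑ v, g v ^ 2
        = ∑ v, ∑ Q ∈ P, ∑ R ∈ P, (if v ∈ Q ∧ v ∈ R then s Q * s R else 0) := by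
          refine Finset.sum_congr rfl fun v _ => ?_
          rw [hgexp, pow_two, Finset.sum_mul_sum]
          exact Finset.sum_congr rfl fun Q _ =>
            Finset.sum_congr rfl fun R _ => by rw [ite_zero_mul_ite_zero]
      _ = ∑ Q ∈ P, ∑ R ∈ P, ∑ v, (if v ∈ Q ∧ v ∈ R then s Q * s R else 0) := by
          rw [Finset.sum_comm]
          exact Finset.sum_congr rfl fun Q _ => Finset.sum_comm
      _ = ∑ Q ∈ P, ∑ R ∈ P, ((Q ∩ R).card : ℝ) * (s Q * s R) := by
          refine Finset.sum_congr rfl fun Q _ => Finset.sum_congr rfl fun R _ => ?_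
          rw [Finset.sum_ite, Finset.sum_const_zero, add_zero, Finset.sum_const,
            hfilter_inter, nsmul_eq_mul]
  have hswap : ∑ Q ∈ P, ∑ R ∈ P, ((Q ∩ R).card : ℝ) * s R ^ 2
      = ∑ Q ∈ P, ∑ R ∈ P, ((Q ∩ R).card : ℝ) * s Q ^ 2 := by
    rw [Finset.sum_comm]
    refine Finset.sum_congr rfl fun Q _ => Finset.sum_congr rfl fun R _ => ?_
    rw [Finset.inter_comm]
  have hAM : ∑ Q ∈ P, ∑ R ∈ P, ((Q ∩ R).card : ℝ) * (s Q * s R)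
      ≤ ∑ Q ∈ P, (∑ R ∈ P, ((Q ∩ R).card : ℝ)) * s Q ^ 2 := by
    have step : ∑ Q ∈ P, ∑ R ∈ P, ((Q ∩ R).card : ℝ) * (s Q * s R)
        ≤ ∑ Q ∈ P, ∑ R ∈ P, ((Q ∩ R).card : ℝ) * ((s Q ^ 2 + s R ^ 2) / 2) := by
      refine Finset.sum_le_sum fun Q _ => Finset.sum_le_sum fun R _ => ?_
      have hc : (0:ℝ) ≤ ((Q ∩ R).card : ℝ) := Nat.cast_nonneg _
      have : s Q * s R ≤ (s Q ^ 2 + s R ^ 2) / 2 := by nlinarith [sq_nonneg (s Q - s R)]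
      exact mul_le_mul_of_nonneg_left this hc
    refine step.trans (le_of_eq ?_)
    have expand2 : ∀ Q ∈ P, ∑ R ∈ P, ((Q ∩ R).card : ℝ) * ((s Q ^ 2 + s R ^ 2) / 2)
        = (∑ R ∈ P, ((Q ∩ R).card : ℝ) * s Q ^ 2) / 2
          + (∑ R ∈ P, ((Q ∩ R).card : ℝ) * s R ^ 2) / 2 := by
      intro Q _
      rw [Finset.sum_div, Finset.sum_div, ← Finset.sum_add_distrib]
      exact Finset.sum_congr rfl fun R _ => by ring
    rw [Finset.sum_congr rfl expand2, Finset.sum_add_distrib, ← Finset.sum_div, ← Finset.sum_div,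
      hswap]
    have : ∀ Q ∈ P, ∑ R ∈ P, ((Q ∩ R).card : ℝ) * s Q ^ 2
        = (∑ R ∈ P, ((Q ∩ R).card : ℝ)) * s Q ^ 2 := by
      intro Q _; rw [Finset.sum_mul]
    rw [Finset.sum_congr rfl this]
    ring
  have hrow : ∀ Q ∈ P, (∑ R ∈ P, ((Q ∩ R).card : ℝ)) ≤ (P.card : ℝ) + t - 1 := by
    intro Q hQ
    have hsplit : ∑ R ∈ P, ((Q ∩ R).card : ℝ)
        = ((Q ∩ Q).card : ℝ) + ∑ R ∈ P.erase Q, ((Q ∩ R).card : ℝ) :=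
      (Finset.add_sum_erase P _ hQ).symm
    rw [hsplit, Finset.inter_self]
    have h1 : (Q.card : ℝ) ≤ t := by exact_mod_cast hsize Q hQ
    have h2 : ∑ R ∈ P.erase Q, ((Q ∩ R).card : ℝ) ≤ (P.card : ℝ) - 1 := by
      have hb : ∀ R ∈ P.erase Q, ((Q ∩ R).card : ℝ) ≤ 1 := by
        intro R hR
        rw [Finset.mem_erase] at hR
        exact_mod_cast hint Q hQ R hR.2 (Ne.symm hR.1)
      calc ∑ R ∈ P.erase Q, ((Q ∩ R).card : ℝ) ≤ ∑ R ∈ P.erase Q, (1:ℝ) :=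
            Finset.sum_le_sum hb
        _ = ((P.erase Q).card : ℝ) := by rw [Finset.sum_const, nsmul_eq_mul, mul_one]
        _ = (P.card : ℝ) - 1 := by
            rw [Finset.card_erase_of_mem hQ]
            have : 1 ≤ P.card := Finset.card_pos.mpr ⟨Q, hQ⟩
            push_cast [Nat.cast_sub this]
            ring
    linarith
  have hkey : S ^ 2 ≤ ∑ Q ∈ P, (∑ R ∈ P, ((Q ∩ R).card : ℝ)) * s Q ^ 2 := by
    rw [hgsq] at hCS; exact hCS.trans hAM
  refine ⟨hkey, hrow, ?_⟩
  have hS0 : 0 ≤ S := Finset.sum_nonneg fun Q _ => sq_nonneg _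
  have hchain : S ^ 2 ≤ ((P.card : ℝ) + t - 1) * S := by
    have h2 : ∑ Q ∈ P, (∑ R ∈ P, ((Q ∩ R).card : ℝ)) * s Q ^ 2
        ≤ ∑ Q ∈ P, ((P.card : ℝ) + t - 1) * s Q ^ 2 :=
      Finset.sum_le_sum fun Q hQ =>
        mul_le_mul_of_nonneg_right (hrow Q hQ) (sq_nonneg _)
    rw [← Finset.mul_sum] at h2
    exact hkey.trans h2
  rcases eq_or_lt_of_le hS0 with h | h
  · have hN : (0:ℝ) ≤ (P.card : ℝ) := Nat.cast_nonneg _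
    rw [← h]
    linarith
  · rw [pow_two] at hchain
    exact (mul_le_mul_iff_left₀ h).mp hchain

lemma CP.tight (P : Finset (Finset V)) (t : ℕ)
    (hsize : ∀ Q ∈ P, Q.card ≤ t)
    (hint : ∀ Q ∈ P, ∀ R ∈ P, Q ≠ R → (Q ∩ R).card ≤ 1)
    (x : V → ℝ) (hx1 : ∑ v, x v ^ 2 = 1) (ht : (1:ℝ) ≤ (t:ℝ))
    (hSeq : ∑ Q ∈ P, (∑ v ∈ Q, x v) ^ 2 = (P.card : ℝ) + t - 1) :
    ∀ Q ∈ P, 0 < ∑ v ∈ Q, x v → (∑ R ∈ P, ((Q ∩ R).card : ℝ)) = (P.card : ℝ) + t - 1 := by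
  obtain ⟨ha, hb, _⟩ := CP.chain P t hsize hint x hx1 ht
  have hupper : ∑ Q ∈ P, (∑ R ∈ P, ((Q ∩ R).card : ℝ)) * (∑ v ∈ Q, x v) ^ 2
      ≤ ((P.card : ℝ) + t - 1) * ((P.card : ℝ) + t - 1) := by
    calc ∑ Q ∈ P, (∑ R ∈ P, ((Q ∩ R).card : ℝ)) * (∑ v ∈ Q, x v) ^ 2
        ≤ ∑ Q ∈ P, ((P.card : ℝ) + t - 1) * (∑ v ∈ Q, x v) ^ 2 :=
          Finset.sum_le_sum fun Q hQ =>
            mul_le_mul_of_nonneg_right (hb Q hQ) (sq_nonneg _)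
      _ = ((P.card : ℝ) + t - 1) * ∑ Q ∈ P, (∑ v ∈ Q, x v) ^ 2 := by
          rw [Finset.mul_sum]
      _ = ((P.card : ℝ) + t - 1) * ((P.card : ℝ) + t - 1) := by rw [hSeq]
  have hlower : ((P.card : ℝ) + t - 1) * ((P.card : ℝ) + t - 1)
      ≤ ∑ Q ∈ P, (∑ R ∈ P, ((Q ∩ R).card : ℝ)) * (∑ v ∈ Q, x v) ^ 2 := by
    have := ha
    rw [hSeq, pow_two] at this
    exact this
  have hEq : ∑ Q ∈ P, (∑ R ∈ P, ((Q ∩ R).card : ℝ)) * (∑ v ∈ Q, x v) ^ 2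
      = ((P.card : ℝ) + t - 1) * ((P.card : ℝ) + t - 1) := le_antisymm hupper hlower
  have hzero : ∑ Q ∈ P, (((P.card : ℝ) + t - 1) - ∑ R ∈ P, ((Q ∩ R).card : ℝ))
      * (∑ v ∈ Q, x v) ^ 2 = 0 := by
    have hsplit : ∀ Q ∈ P, (((P.card : ℝ) + t - 1) - ∑ R ∈ P, ((Q ∩ R).card : ℝ))
        * (∑ v ∈ Q, x v) ^ 2
        = ((P.card : ℝ) + t - 1) * (∑ v ∈ Q, x v) ^ 2
          - (∑ R ∈ P, ((Q ∩ R).card : ℝ)) * (∑ v ∈ Q, x v) ^ 2 := fun Q _ => by ring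
    rw [Finset.sum_congr rfl hsplit, Finset.sum_sub_distrib, ← Finset.mul_sum, hSeq, hEq,
      sub_self]
  have hterms := (Finset.sum_eq_zero_iff_of_nonneg ?_).mp hzero
  · intro Q hQ hs
    have h := hterms Q hQ
    rcases mul_eq_zero.mp h with h1 | h1
    · linarith
    · exact absurd h1 (by positivity)
  · intro Q hQ
    have := hb Q hQ
    have h2 : (0:ℝ) ≤ ((P.card : ℝ) + t - 1) - ∑ R ∈ P, ((Q ∩ R).card : ℝ) := by linarith
    exact mul_nonneg h2 (sq_nonneg _)

end Aux

/-- Equality case of the spectral lower bound for `cp^{(t)}(G)`: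
if `cp^{(t)}(G) = ρ(G) − t + 1 + ⌈δ(G)/(t−1)⌉`, then `t−1` divides `δ(G)`, `G` is
regular of degree `δ(G)`, and `G` admits a `K_t`-decomposition in which any two
distinct cliques intersect in exactly one vertex. -/
theorem regular_decomposition_of_cpT_eq [Fintype V] [DecidableEq V] (G : SimpleGraph V)
    [DecidableRel G.Adj] (t : ℕ) (ht : 2 ≤ t) (hconn : G.Connected)
    (hedge : G.edgeSet.Nonempty)
    (heq : (cpT G t : ℝ) = specRad G - t + 1 + (⌈(G.minDegree : ℝ) / ((t : ℝ) - 1)⌉ : ℤ)) :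
    (t - 1) ∣ G.minDegree ∧ G.IsRegularOfDegree G.minDegree ∧
      ∃ P : Finset (Finset V), IsCliquePartition G P ∧ (∀ s ∈ P, s.card = t) ∧
        ∀ s₁ ∈ P, ∀ s₂ ∈ P, s₁ ≠ s₂ → (s₁ ∩ s₂).card = 1 := by
  classical
  obtain ⟨a, b, hab⟩ : ∃ a b, G.Adj a b := by
    obtain ⟨e, he⟩ := hedge
    revert he
    refine Sym2.ind (fun x y h => ⟨x, y, G.mem_edgeSet.mp h⟩) e
  haveI : Nonempty V := ⟨a⟩
  obtain ⟨x, hxpos, hx1, hxeig⟩ := exists_perron G hconn hedge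
  have ht1 : (1:ℝ) ≤ (t:ℝ) := by exact_mod_cast le_trans one_le_two ht
  have htR : (0:ℝ) < (t:ℝ) - 1 := by
    have : (2:ℝ) ≤ (t:ℝ) := by exact_mod_cast ht
    linarith
  set q : ℤ := ⌈(G.minDegree : ℝ) / ((t : ℝ) - 1)⌉ with hq_def
  have hquad : ∑ v, (∑ u ∈ G.neighborFinset v, x u) * x v = specRad G := by
    calc ∑ v, (∑ u ∈ G.neighborFinset v, x u) * x v
        = ∑ v, specRad G * x v ^ 2 := by
          refine Finset.sum_congr rfl fun v _ => ?_
          rw [hxeig v, pow_two]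
          ring
      _ = specRad G * ∑ v, x v ^ 2 := by rw [Finset.mul_sum]
      _ = specRad G := by rw [hx1, mul_one]
  -- q ≤ m_v for any admissible partition
  have hqle : ∀ (P' : Finset (Finset V)), IsCliquePartition G P' → (∀ s ∈ P', s.card ≤ t) →
      ∀ v, (q:ℝ) ≤ ((P'.filter (fun Q => v ∈ Q)).card : ℝ) := by
    intro P' hP' hsz v
    have hdeg := CP.degree_eq hP' v
    have hnat : G.degree v ≤ (P'.filter (fun Q => v ∈ Q)).card * (t-1) := by
      rw [hdeg]
      calc ∑ Q ∈ P'.filter (fun Q => v ∈ Q), (Q.card - 1)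
          ≤ ∑ Q ∈ P'.filter (fun Q => v ∈ Q), (t-1) := by
            refine Finset.sum_le_sum fun Q hQ => ?_
            have := hsz Q (Finset.mem_filter.mp hQ).1
            omega
        _ = (P'.filter (fun Q => v ∈ Q)).card * (t-1) := by
            rw [Finset.sum_const, smul_eq_mul]
    have hmin : G.minDegree ≤ G.degree v := G.minDegree_le_degree v
    have hreal : (G.minDegree : ℝ) / ((t:ℝ)-1)
        ≤ ((P'.filter (fun Q => v ∈ Q)).card : ℝ) := by
      rw [div_le_iff₀ htR]
      have h3 : G.minDegree ≤ (P'.filter (fun Q => v ∈ Q)).card * (t-1) :=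
        le_trans hmin hnat
      calc (G.minDegree : ℝ)
          ≤ (((P'.filter (fun Q => v ∈ Q)).card * (t-1) : ℕ) : ℝ) := Nat.cast_le.mpr h3
        _ = ((P'.filter (fun Q => v ∈ Q)).card : ℝ) * ((t:ℝ)-1) := by
            rw [Nat.cast_mul, Nat.cast_sub (show 1 ≤ t by omega)]
            norm_num
    have hic : q ≤ (((P'.filter (fun Q => v ∈ Q)).card : ℕ) : ℤ) :=
      Int.ceil_le.mpr (by push_cast; exact hreal)
    exact_mod_cast hic
  -- general inequality
  have hineq : ∀ (P' : Finset (Finset V)), IsCliquePartition G P' → (∀ s ∈ P', s.card ≤ t) →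
      specRad G ≤ (P'.card : ℝ) + t - 1 - q := by
    intro P' hP' hsz
    have hid := CP.identity hP' x
    rw [hquad] at hid
    obtain ⟨_, _, hS⟩ := CP.chain P' t hsz
      (fun Q hQ R hR hne => CP.inter_le_one hP' hQ hR hne) x hx1 ht1
    have hD : (q:ℝ) ≤ ∑ v, ((P'.filter (fun Q => v ∈ Q)).card : ℝ) * x v ^ 2 := by
      calc (q:ℝ) = ∑ v, (q:ℝ) * x v ^ 2 := by
            rw [← Finset.mul_sum, hx1, mul_one]
        _ ≤ ∑ v, ((P'.filter (fun Q => v ∈ Q)).card : ℝ) * x v ^ 2 :=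
            Finset.sum_le_sum fun v _ =>
              mul_le_mul_of_nonneg_right (hqle P' hP' hsz v) (sq_nonneg _)
    linarith
  -- trivial partition into edges, to get an optimal partition
  have hP₂ : IsCliquePartition G
      (Finset.univ.filter fun s : Finset V => s.card = 2 ∧ G.IsClique (s : Set V)) := by
    constructor
    · intro s hs
      exact ((Finset.mem_filter.mp hs).2).2
    · intro u v huv
      refine ⟨{u, v}, ⟨?_, ?_, ?_⟩, ?_⟩
      · rw [Finset.mem_filter]
        refine ⟨Finset.mem_univ _, Finset.card_pair huv.ne, ?_⟩
        rw [Finset.coe_pair]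
        exact SimpleGraph.isClique_pair.mpr fun _ => huv
      · exact Finset.mem_insert_self u {v}
      · exact Finset.mem_insert_of_mem (Finset.mem_singleton_self v)
      · rintro s ⟨hs, hus, hvs⟩
        rw [Finset.mem_filter] at hs
        have hsub : ({u, v} : Finset V) ⊆ s := by
          intro w hw
          rcases Finset.mem_insert.mp hw with rfl | hw
          · exact hus
          · rw [Finset.mem_singleton] at hw; subst hw; exact hvs
        exact (Finset.eq_of_subset_of_card_le hsub
          (by rw [hs.2.1, Finset.card_pair huv.ne])).symm
  have hne_set : {m | ∃ P : Finset (Finset V),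
      IsCliquePartition G P ∧ (∀ s ∈ P, s.card ≤ t) ∧ P.card = m}.Nonempty := by
    refine ⟨_, _, hP₂, fun s hs => ?_, rfl⟩
    have := (Finset.mem_filter.mp hs).2.1
    omega
  obtain ⟨P, hP, hsz, hcard⟩ := Nat.sInf_mem hne_set
  have hint : ∀ Q ∈ P, ∀ R ∈ P, Q ≠ R → (Q ∩ R).card ≤ 1 :=
    fun Q hQ R hR hne => CP.inter_le_one hP hQ hR hne
  have hcardR : (P.card : ℝ) = (cpT G t : ℝ) := by exact_mod_cast hcard
  have hlam : specRad G = (P.card : ℝ) + t - 1 - q := by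
    rw [hcardR]
    linarith [heq]
  -- equality extraction
  have hid := CP.identity hP x
  rw [hquad] at hid
  obtain ⟨_, _, hS⟩ := CP.chain P t hsz hint x hx1 ht1
  have hD : (q:ℝ) ≤ ∑ v, ((P.filter (fun Q => v ∈ Q)).card : ℝ) * x v ^ 2 := by
    calc (q:ℝ) = ∑ v, (q:ℝ) * x v ^ 2 := by rw [← Finset.mul_sum, hx1, mul_one]
      _ ≤ _ := Finset.sum_le_sum fun v _ =>
            mul_le_mul_of_nonneg_right (hqle P hP hsz v) (sq_nonneg _)
  have hDeq : ∑ v, ((P.filter (fun Q => v ∈ Q)).card : ℝ) * x v ^ 2 = (q:ℝ) := by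
    linarith
  have hSeq : ∑ Q ∈ P, (∑ v ∈ Q, x v) ^ 2 = (P.card : ℝ) + t - 1 := by
    linarith
  -- all multiplicities equal q
  have hmv : ∀ v, ((P.filter (fun Q => v ∈ Q)).card : ℝ) = (q:ℝ) := by
    have hzero : ∑ v, (((P.filter (fun Q => v ∈ Q)).card : ℝ) - (q:ℝ)) * x v ^ 2 = 0 := by
      have : ∀ v ∈ Finset.univ, (((P.filter (fun Q => v ∈ Q)).card : ℝ) - (q:ℝ)) * x v ^ 2
          = ((P.filter (fun Q => v ∈ Q)).card : ℝ) * x v ^ 2 - (q:ℝ) * x v ^ 2 :=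
        fun v _ => by ring
      rw [Finset.sum_congr rfl this, Finset.sum_sub_distrib, hDeq, ← Finset.mul_sum, hx1,
        mul_one, sub_self]
    have hterms := (Finset.sum_eq_zero_iff_of_nonneg ?_).mp hzero
    · intro v
      have h := hterms v (Finset.mem_univ v)
      rcases mul_eq_zero.mp h with h1 | h1
      · linarith
      · exact absurd h1 (pow_ne_zero 2 (ne_of_gt (hxpos v)))
    · intro v _
      have := hqle P hP hsz v
      have h2 : (0:ℝ) ≤ ((P.filter (fun Q => v ∈ Q)).card : ℝ) - (q:ℝ) := by linarith
      exact mul_nonneg h2 (sq_nonneg _)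
  -- the empty clique is not in P
  have hnotempty : (∅ : Finset V) ∉ P := by
    intro h₀
    have hP' : IsCliquePartition G (P.erase ∅) := by
      constructor
      · intro s hs
        exact hP.1 s (Finset.mem_of_mem_erase hs)
      · intro u v huv
        obtain ⟨s₀, ⟨hs₀P, hu, hv⟩, huniq⟩ := hP.2 u v huv
        refine ⟨s₀, ⟨Finset.mem_erase.mpr ⟨?_, hs₀P⟩, hu, hv⟩,
          fun s hs => huniq s ⟨Finset.mem_of_mem_erase hs.1, hs.2⟩⟩
        rintro rfl
        exact Finset.notMem_empty u hu
    have hineq' := hineq (P.erase ∅) hP' (fun s hs => hsz s (Finset.mem_of_mem_erase hs))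
    rw [Finset.card_erase_of_mem h₀] at hineq'
    have hN1 : 1 ≤ P.card := Finset.card_pos.mpr ⟨∅, h₀⟩
    have hc : ((P.card - 1 : ℕ) : ℝ) = (P.card : ℝ) - 1 := by
      rw [Nat.cast_sub hN1]
      norm_num
    rw [hc] at hineq'
    linarith
  have hN1 : 1 ≤ P.card := by
    obtain ⟨s₀, ⟨hs₀, _, _⟩, _⟩ := hP.2 a b hab
    exact Finset.card_pos.mpr ⟨s₀, hs₀⟩
  -- tight rows
  have hrows := CP.tight P t hsz hint x hx1 ht1 hSeq
  have hsize_eq : ∀ Q ∈ P, Q.card = t ∧ ∀ R ∈ P, R ≠ Q → (Q ∩ R).card = 1 := by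
    intro Q hQ
    have hQne : Q.Nonempty := by
      rw [Finset.nonempty_iff_ne_empty]
      rintro rfl
      exact hnotempty hQ
    have hrow := hrows Q hQ (Finset.sum_pos (fun v _ => hxpos v) hQne)
    have hnat : ∑ R ∈ P, (Q ∩ R).card = P.card - 1 + t := by
      have h2 : ((∑ R ∈ P, (Q ∩ R).card : ℕ) : ℝ) = ∑ R ∈ P, ((Q ∩ R).card : ℝ) := by
        push_cast
        rfl
      have h1 : ((P.card - 1 + t : ℕ) : ℝ) = (P.card : ℝ) - 1 + t := by
        rw [Nat.cast_add, Nat.cast_sub hN1]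
        norm_num
      have : ((∑ R ∈ P, (Q ∩ R).card : ℕ) : ℝ) = ((P.card - 1 + t : ℕ) : ℝ) := by
        rw [h2, h1, hrow]
        ring
      exact_mod_cast this
    rw [← Finset.add_sum_erase P _ hQ, Finset.inter_self] at hnat
    have hbound : ∀ R ∈ P.erase Q, (Q ∩ R).card ≤ 1 := by
      intro R hR
      rw [Finset.mem_erase] at hR
      exact hint Q hQ R hR.2 (Ne.symm hR.1)
    have hle : ∑ R ∈ P.erase Q, (Q ∩ R).card ≤ P.card - 1 := by
      calc ∑ R ∈ P.erase Q, (Q ∩ R).card ≤ ∑ R ∈ P.erase Q, 1 :=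
            Finset.sum_le_sum hbound
        _ = P.card - 1 := by
            rw [Finset.sum_const, smul_eq_mul, mul_one, Finset.card_erase_of_mem hQ]
    have hQt : Q.card ≤ t := hsz Q hQ
    have hQcard : Q.card = t := by omega
    have hsum' : ∑ R ∈ P.erase Q, (Q ∩ R).card = P.card - 1 := by omega
    have heach : ∀ R ∈ P.erase Q, (Q ∩ R).card = 1 := by
      refine (Finset.sum_eq_sum_iff_of_le hbound).mp ?_
      rw [hsum', Finset.sum_const, smul_eq_mul, mul_one, Finset.card_erase_of_mem hQ]
    refine ⟨hQcard, fun R hR hne => heach R (Finset.mem_erase.mpr ⟨hne, hR⟩)⟩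
  -- degrees
  have hmv_nat : ∀ v w : V, (P.filter (fun Q => v ∈ Q)).card
      = (P.filter (fun Q => w ∈ Q)).card := by
    intro v w
    exact_mod_cast (hmv v).trans (hmv w).symm
  have hdeg : ∀ v, G.degree v = (P.filter (fun Q => v ∈ Q)).card * (t - 1) := by
    intro v
    rw [CP.degree_eq hP v]
    calc ∑ Q ∈ P.filter (fun Q => v ∈ Q), (Q.card - 1)
        = ∑ Q ∈ P.filter (fun Q => v ∈ Q), (t - 1) := by
          refine Finset.sum_congr rfl fun Q hQ => ?_
          rw [(hsize_eq Q (Finset.mem_filter.mp hQ).1).1]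
      _ = (P.filter (fun Q => v ∈ Q)).card * (t - 1) := by
          rw [Finset.sum_const, smul_eq_mul]
  obtain ⟨v₀, hv₀⟩ := G.exists_minimal_degree_vertex
  refine ⟨?_, ?_, P, hP, fun s hs => (hsize_eq s hs).1,
    fun s₁ h₁ s₂ h₂ hne => (hsize_eq s₁ h₁).2 s₂ h₂ (Ne.symm hne)⟩
  · rw [hv₀, hdeg v₀]
    exact dvd_mul_left _ _
  · intro v
    rw [hdeg v, hmv_nat v v₀, ← hdeg v₀, ← hv₀]
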